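/- Let k be a positive integer and let p be a pattern containing exactly k distinct variables. If p has length at least 3^k, then p is 3-avoidable; that is, there exist infinitely many words over a 3-letter alphabet having no factor that is an instance of p. -/

import Mathlib

/-- A word `w` is an instance of the pattern `p` if there is a non-erasing
substitution (equivalently, a non-erasing monoid morphism on free monoids)
sending `p` to `w`. -/
def IsInstance {Δ α : Type*} (p : List Δ) (w : List α) : Prop :=
  ∃ f : Δ → List α, (∀ v, f v ≠ []) ∧ (p.map f).flatten = w

/-- A word `w` avoids the pattern `p` if no factor of `w` is an instance of `p`. -/
def Avoids {Δ α : Type*} (w : List α) (p : List Δ) : Prop :=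
  ∀ x : List α, x <:+: w → ¬ IsInstance p x

noncomputable section

namespace AvoidAux

open scoped Classical

/-! ### Words of a given length over `Fin 3` -/

def W3 : ℕ → Finset (List (Fin 3))
  | 0 => {([] : List (Fin 3))}
  | n+1 => (W3 n).biUnion fun w => Finset.univ.image fun c : Fin 3 => w ++ [c]

lemma mem_W3 {n : ℕ} {w : List (Fin 3)} : w ∈ W3 n ↔ w.length = n := by
  induction n generalizing w with
  | zero => simp [W3, List.length_eq_zero_iff]
  | succ n ih =>
    simp only [W3, Finset.mem_biUnion, Finset.mem_image, Finset.mem_univ, true_and]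
    constructor
    · rintro ⟨w', hw', c, rfl⟩
      simp [ih.mp hw']
    · intro hlen
      rcases w.eq_nil_or_concat with rfl | ⟨l, b, hw⟩
      · simp at hlen
      · subst hw
        refine ⟨l, ih.mpr ?_, b, by simp⟩
        simp [List.concat_eq_append] at hlen
        omega

lemma card_W3 (n : ℕ) : (W3 n).card = 3 ^ n := by
  induction n with
  | zero => simp [W3]
  | succ n ih =>
    rw [W3, Finset.card_biUnion]
    · have : ∀ w ∈ W3 n, (Finset.univ.image fun c : Fin 3 => w ++ [c]).card = 3 := by
        intro w _
        rw [Finset.card_image_of_injective _ (fun a b h => by simpa using h)]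
        simp
      rw [Finset.sum_congr rfl this]
      simp [ih, pow_succ, mul_comm]
    · intro x _ y _ hxy
      simp only [Finset.disjoint_left, Finset.mem_image, Finset.mem_univ, true_and]
      rintro a ⟨c, rfl⟩ ⟨d, hd⟩
      exact hxy (by simpa using (List.append_inj_left' hd (by simp)).symm)

/-! ### Basic lemmas on instances and avoidance -/

variable {Δ α : Type*} [DecidableEq Δ]

lemma isInstance_length_le {p : List Δ} {z : List α} (h : IsInstance p z) :
    p.length ≤ z.length := by
  obtain ⟨f, hf, rfl⟩ := h
  rw [List.length_flatten]
  calc p.length = (p.map f).length := by simp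
    _ = ((p.map f).map List.length).length := by simp
    _ ≤ ((p.map f).map List.length).sum := List.length_le_sum_of_one_le _ (by
        intro i hi
        simp only [List.mem_map] at hi
        obtain ⟨s, ⟨v, _, rfl⟩, rfl⟩ := hi
        exact Nat.one_le_iff_ne_zero.mpr (by simpa using hf v))
    _ = (p.map (fun v => (f v).length)).sum := by rw [List.map_map]; rfl
    _ = ((p.map f).map List.length).sum := by rw [List.map_map]; rfl

lemma avoids_nil {p : List Δ} (hp : p ≠ []) : Avoids ([] : List α) p := by
  intro x hx hinst
  have hxnil : x = [] := List.eq_nil_of_infix_nil hx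
  have := isInstance_length_le hinst
  subst hxnil
  simp only [List.length_nil, Nat.le_zero] at this
  exact hp (List.eq_nil_of_length_eq_zero this)

lemma avoids_of_infix {p : List Δ} {w x : List α} (h : Avoids w p) (hx : x <:+: w) :
    Avoids x p := fun y hy => h y (hy.trans hx)

/-- If `r` is an infix of the pattern `p`, then any word avoiding `r` avoids `p`. -/
lemma avoids_of_avoids_infix_pattern {r p : List Δ} {w : List α}
    (hrp : r <:+: p) (h : Avoids w r) : Avoids w p := by
  rintro x hx ⟨f, hf, rfl⟩
  obtain ⟨s, t, rfl⟩ := hrp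
  refine h ((r.map f).flatten) (List.IsInfix.trans ?_ hx) ⟨f, hf, rfl⟩
  simp only [List.map_append, List.flatten_append]
  exact ⟨(s.map f).flatten, (t.map f).flatten, by simp [List.append_assoc]⟩

lemma infix_concat {x w : List α} {c : α} (h : x <:+: w ++ [c]) :
    x <:+: w ∨ x <:+ w ++ [c] := by
  obtain ⟨s, t, hst⟩ := h
  rcases t.eq_nil_or_concat with rfl | ⟨t', d, ht⟩
  · right; exact ⟨s, by simpa using hst⟩
  · left
    subst ht
    rw [List.concat_eq_append,
      show s ++ x ++ (t' ++ [d]) = (s ++ x ++ t') ++ [d] by simp [List.append_assoc]] at hst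
    have : s ++ x ++ t' = w := List.append_inj_left' hst (by simp)
    exact ⟨s, t', this⟩

/-! ### The reduction to a doubled infix -/

lemma reduction : ∀ (k : ℕ) (p : List Δ), p ≠ [] → p.toFinset.card ≤ k →
    3 ^ k ≤ p.length →
    ∃ q : List Δ, q <:+: p ∧ q ≠ [] ∧ 3 ^ q.toFinset.card ≤ q.length ∧
      ∀ v ∈ q, 2 ≤ q.count v := by
  intro k
  induction k with
  | zero =>
    intro p hp hcard _
    exfalso
    obtain ⟨v, hv⟩ := List.exists_mem_of_ne_nil p hp
    have : v ∈ p.toFinset := by simp [hv]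
    have := Finset.card_pos.mpr ⟨v, this⟩
    omega
  | succ k ih =>
    intro p hp hcard hlen
    by_cases hdb : ∀ v ∈ p, 2 ≤ p.count v
    · exact ⟨p, List.infix_refl p, hp,
        le_trans (pow_le_pow_right₀ (by norm_num) hcard) hlen, hdb⟩
    · push_neg at hdb
      obtain ⟨x, hxp, hcount⟩ := hdb
      have hc1 : p.count x = 1 := by
        have h1 : 0 < p.count x := List.count_pos_iff.mpr hxp
        omega
      obtain ⟨a, b, hab⟩ : ∃ a b, p = a ++ x :: b := List.append_of_mem hxp
      have hxab : x ∉ a ∧ x ∉ b := by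
        subst hab
        rw [List.count_append, List.count_cons_self] at hc1
        constructor <;> intro hmem
        · have : 0 < a.count x := List.count_pos_iff.mpr hmem; omega
        · have : 0 < b.count x := List.count_pos_iff.mpr hmem; omega
      have hsum : a.length + b.length + 1 = p.length := by subst hab; simp; omega
      have h3 : 3 ^ (k+1) = 3 * 3 ^ k := by rw [pow_succ]; ring
      have h3pos : 0 < 3 ^ k := Nat.pow_pos (by norm_num)
      -- choose the longer side
      obtain ⟨c, hcinf, hxc, hclen⟩ :
          ∃ c : List Δ, c <:+: p ∧ x ∉ c ∧ 3 ^ k ≤ c.length := by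
        rcases le_or_gt b.length a.length with hba | hba
        · exact ⟨a, ⟨[], x :: b, by simp [hab]⟩, hxab.1, by omega⟩
        · exact ⟨b, ⟨a ++ [x], [], by simp [hab]⟩, hxab.2, by omega⟩
      clear hsum hcount hc1
      have hcne : c ≠ [] := by
        intro hnil; rw [hnil] at hclen; simp only [List.length_nil] at hclen
        omega
      have hcsub : c.toFinset ⊆ p.toFinset.erase x := by
        intro v hv
        rw [List.mem_toFinset] at hv
        rw [Finset.mem_erase]
        exact ⟨fun hvx => hxc (hvx ▸ hv), List.mem_toFinset.mpr (hcinf.subset hv)⟩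
      have hccard : c.toFinset.card ≤ k := by
        have h1 := Finset.card_le_card hcsub
        have h2 : (p.toFinset.erase x).card = p.toFinset.card - 1 :=
          Finset.card_erase_of_mem (List.mem_toFinset.mpr hxp)
        have h4 : 0 < p.toFinset.card := Finset.card_pos.mpr ⟨x, List.mem_toFinset.mpr hxp⟩
        omega
      obtain ⟨q, hq1, hq2, hq3, hq4⟩ := ih c hcne hccard hclen
      exact ⟨q, hq1.trans hcinf, hq2, hq3, hq4⟩

/-! ### Counting avoiding words -/

def Aset (q : List Δ) (n : ℕ) : Finset (List (Fin 3)) :=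
  (W3 n).filter fun w => Avoids w q

def acount (q : List Δ) (n : ℕ) : ℕ := (Aset q n).card

lemma mem_Aset {q : List Δ} {n : ℕ} {w : List (Fin 3)} :
    w ∈ Aset q n ↔ w.length = n ∧ Avoids w q := by
  simp [Aset, mem_W3]

def Bad (q : List Δ) (n : ℕ) : Finset (List (Fin 3) × Fin 3) :=
  ((Aset q n) ×ˢ (Finset.univ : Finset (Fin 3))).filter
    fun wc => ¬ Avoids (wc.1 ++ [wc.2]) q

lemma concat_injOn : ∀ (w w' : List (Fin 3)) (c c' : Fin 3),
    w ++ [c] = w' ++ [c'] → w = w' ∧ c = c' := by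
  intro w w' c c' h
  obtain ⟨h1, h2⟩ := List.append_inj' h (by simp)
  exact ⟨h1, by simpa using h2⟩

lemma ext_bound (q : List Δ) (n : ℕ) :
    3 * acount q n ≤ acount q (n+1) + (Bad q n).card := by
  classical
  set S := (Aset q n) ×ˢ (Finset.univ : Finset (Fin 3)) with hS
  have hcard : S.card = acount q n * 3 := by
    simp [hS, acount, Finset.card_product]
  have hsplit : (S.filter fun wc => Avoids (wc.1 ++ [wc.2]) q).card + (Bad q n).card
      = S.card := by
    rw [Bad, ← hS]
    exact Finset.card_filter_add_card_filter_not _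
  have hgood : (S.filter fun wc => Avoids (wc.1 ++ [wc.2]) q).card ≤ acount q (n+1) := by
    apply Finset.card_le_card_of_injOn (fun wc => wc.1 ++ [wc.2])
    · intro wc hwc
      simp only [Finset.mem_coe, Finset.mem_filter, hS, Finset.mem_product] at hwc
      obtain ⟨⟨hw1, -⟩, hav⟩ := hwc
      rw [Finset.mem_coe, mem_Aset] at *
      exact ⟨by simp [hw1.1], hav⟩
    · intro wc _ wc' _ h
      obtain ⟨h1, h2⟩ := concat_injOn _ _ _ _ h
      exact Prod.ext h1 h2
  omega

lemma bad_suffix {q : List Δ} {n : ℕ} {wc : List (Fin 3) × Fin 3}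
    (h : wc ∈ Bad q n) :
    wc.1 ∈ Aset q n ∧ ∃ z, z <:+ wc.1 ++ [wc.2] ∧ IsInstance q z := by
  obtain ⟨w, c⟩ := wc
  simp only [Bad, Finset.mem_filter, Finset.mem_product] at h
  obtain ⟨⟨hw, -⟩, hnav⟩ := h
  refine ⟨hw, ?_⟩
  rw [Avoids] at hnav
  push_neg at hnav
  obtain ⟨x, hx, hinst⟩ := hnav
  rcases infix_concat hx with hxw | hxs
  · exact absurd hinst ((mem_Aset.mp hw).2 x hxw)
  · exact ⟨x, hxs, hinst⟩


/-! ### Arithmetic helpers -/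

lemma geom_bound (t : ℚ) (h0 : 0 ≤ t) (h1 : t < 1) (m : ℕ) :
    ∑ ℓ ∈ Finset.Icc 1 m, t ^ ℓ ≤ t / (1 - t) := by
  have h1t : 0 < 1 - t := by linarith
  have hsum : ∑ ℓ ∈ Finset.Icc 1 m, t ^ ℓ = t * ∑ i ∈ Finset.range m, t ^ i := by
    rw [Finset.mul_sum, ← Finset.Ico_add_one_right_eq_Icc, Finset.sum_Ico_eq_sum_range]
    exact Finset.sum_congr (by norm_num) fun i _ => by rw [pow_add, pow_one, mul_comm]
  rw [hsum]
  have hgeo : ∑ i ∈ Finset.range m, t ^ i ≤ 1 / (1 - t) := by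
    rw [le_div_iff₀ h1t]
    have hg := geom_sum_mul t m
    have hp : (0:ℚ) ≤ t ^ m := pow_nonneg h0 m
    nlinarith
  calc t * ∑ i ∈ Finset.range m, t ^ i ≤ t * (1 / (1 - t)) :=
        mul_le_mul_of_nonneg_left hgeo h0
    _ = t / (1 - t) := by ring

lemma chain {q : List Δ} {n : ℕ}
    (H : ∀ i, i < n → 12 * acount q i ≤ 5 * acount q (i+1)) :
    ∀ d i, i + d = n → (acount q i : ℚ) ≤ (5/12) ^ d * acount q n := by
  intro d
  induction d with
  | zero => intro i hi; subst hi; simp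
  | succ d ihd =>
    intro i hi
    have h1 : 12 * acount q i ≤ 5 * acount q (i+1) := H i (by omega)
    have h2 := ihd (i+1) (by omega)
    have h3 : (acount q i : ℚ) ≤ (5/12) * acount q (i+1) := by
      have h4 : ((12 * acount q i : ℕ) : ℚ) ≤ ((5 * acount q (i+1) : ℕ) : ℚ) :=
        Nat.cast_le.mpr h1
      push_cast at h4
      linarith
    calc (acount q i : ℚ) ≤ (5/12) * acount q (i+1) := h3
      _ ≤ (5/12) * ((5/12)^d * acount q n) :=
          mul_le_mul_of_nonneg_left h2 (by norm_num)
      _ = (5/12)^(d+1) * acount q n := by ring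

/-! ### The cube pattern -/

lemma isInstance_cube_iff {x : Δ} {z : List α} :
    IsInstance [x,x,x] z ↔ ∃ u : List α, u ≠ [] ∧ z = u ++ u ++ u := by
  constructor
  · rintro ⟨f, hf, rfl⟩
    exact ⟨f x, hf x, by simp⟩
  · rintro ⟨u, hu, rfl⟩
    exact ⟨fun _ => u, fun _ => hu, by simp⟩

lemma cube_reconstruct {s u : List (Fin 3)} {N : ℕ} (hN : s.length = N)
    (hsuf : u ++ u ++ u <:+ s) :
    3 * u.length ≤ N ∧
    s.take (N - 2 * u.length) ++
      (s.take (N - 2 * u.length)).drop ((N - 2 * u.length) - u.length) ++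
      (s.take (N - 2 * u.length)).drop ((N - 2 * u.length) - u.length) = s := by
  obtain ⟨y, hy⟩ := hsuf
  have hlen : N = y.length + 3 * u.length := by
    rw [← hN, ← hy]; simp; ring
  refine ⟨by omega, ?_⟩
  have hz : s.take (N - 2 * u.length) = y ++ u := by
    have h1 : N - 2 * u.length = (y ++ u).length := by
      simp only [List.length_append]; omega
    rw [h1, ← hy, show y ++ (u ++ u ++ u) = (y ++ u) ++ (u ++ u) by simp]
    exact List.take_left
  rw [hz]
  have hzd : (y ++ u).drop ((N - 2 * u.length) - u.length) = u := by
    have h2 : (N - 2 * u.length) - u.length = y.length := by omega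
    rw [h2]
    exact List.drop_left
  rw [hzd, ← hy]
  simp

lemma cube_bad_card (x : Δ) (n : ℕ) :
    (Bad [x,x,x] n).card ≤
      ∑ ℓ ∈ Finset.Icc 1 ((n+1)/2), acount [x,x,x] (n+1-2*ℓ) := by
  classical
  have hcs : (∑ ℓ ∈ Finset.Icc 1 ((n+1)/2), acount [x,x,x] (n+1-2*ℓ))
      = ((Finset.Icc 1 ((n+1)/2)).sigma fun ℓ => Aset [x,x,x] (n+1-2*ℓ)).card := by
    rw [Finset.card_sigma]; rfl
  rw [hcs]
  apply Finset.card_le_card_of_injOn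
    (fun wc => if h : ∃ u : List (Fin 3), u ≠ [] ∧ u ++ u ++ u <:+ wc.1 ++ [wc.2]
      then (⟨h.choose.length, (wc.1 ++ [wc.2]).take (n+1-2*h.choose.length)⟩ :
        Σ _ : ℕ, List (Fin 3))
      else ⟨0, []⟩)
  · intro wc hwc
    obtain ⟨hw, z, hzs, hzi⟩ := bad_suffix hwc
    have hex : ∃ u : List (Fin 3), u ≠ [] ∧ u ++ u ++ u <:+ wc.1 ++ [wc.2] := by
      obtain ⟨u, hu, rfl⟩ := isInstance_cube_iff.mp hzi
      exact ⟨u, hu, hzs⟩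
    simp only [dif_pos hex]
    obtain ⟨hu, hsuf⟩ := hex.choose_spec
    have hslen : (wc.1 ++ [wc.2]).length = n + 1 := by
      simp [(mem_Aset.mp hw).1]
    obtain ⟨h3, -⟩ := cube_reconstruct hslen hsuf
    have hul : 1 ≤ hex.choose.length := List.length_pos_iff.mpr hu
    refine Finset.mem_sigma.mpr ⟨?_, ?_⟩
    · show hex.choose.length ∈ Finset.Icc 1 ((n+1)/2)
      rw [Finset.mem_Icc]
      exact ⟨hul, Nat.le_div_iff_mul_le (by norm_num) |>.mpr (by omega)⟩
    · show (wc.1 ++ [wc.2]).take (n+1-2*hex.choose.length) ∈ Aset [x,x,x] (n+1-2*hex.choose.length)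
      rw [mem_Aset]
      constructor
      · rw [List.length_take, hslen]; omega
      · have hle : n+1-2*hex.choose.length ≤ wc.1.length := by
          rw [(mem_Aset.mp hw).1]; omega
        rw [List.take_append_of_le_length hle]
        exact avoids_of_infix ((mem_Aset.mp hw).2) (List.take_prefix _ _).isInfix
  · intro wc hwc wc' hwc' heq
    obtain ⟨hw, z, hzs, hzi⟩ := bad_suffix hwc
    obtain ⟨hw', z', hzs', hzi'⟩ := bad_suffix hwc'
    have hex : ∃ u : List (Fin 3), u ≠ [] ∧ u ++ u ++ u <:+ wc.1 ++ [wc.2] := by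
      obtain ⟨u, hu, rfl⟩ := isInstance_cube_iff.mp hzi
      exact ⟨u, hu, hzs⟩
    have hex' : ∃ u : List (Fin 3), u ≠ [] ∧ u ++ u ++ u <:+ wc'.1 ++ [wc'.2] := by
      obtain ⟨u, hu, rfl⟩ := isInstance_cube_iff.mp hzi'
      exact ⟨u, hu, hzs'⟩
    simp only [dif_pos hex, dif_pos hex'] at heq
    obtain ⟨hleq, hzeq⟩ := Sigma.mk.inj_iff.mp heq
    rw [heq_iff_eq] at hzeq
    have hslen : (wc.1 ++ [wc.2]).length = n + 1 := by simp [(mem_Aset.mp hw).1]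
    have hslen' : (wc'.1 ++ [wc'.2]).length = n + 1 := by simp [(mem_Aset.mp hw').1]
    obtain ⟨h3, hrec⟩ := cube_reconstruct hslen hex.choose_spec.2
    obtain ⟨h3', hrec'⟩ := cube_reconstruct hslen' hex'.choose_spec.2
    have hss : wc.1 ++ [wc.2] = wc'.1 ++ [wc'.2] := by
      rw [← hrec, ← hrec', hzeq, hleq]
    obtain ⟨h1, h2⟩ := concat_injOn _ _ _ _ hss
    exact Prod.ext h1 h2

lemma cube_growth (x : Δ) (n : ℕ) :
    12 * acount [x,x,x] n ≤ 5 * acount [x,x,x] (n+1) := by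
  induction n using Nat.strong_induction_on with
  | _ n IH =>
  have hext := ext_bound [x,x,x] n
  have hbad := cube_bad_card x n
  set m := (n+1)/2 with hm
  have hsum : (∑ ℓ ∈ Finset.Icc 1 m, (acount [x,x,x] (n+1-2*ℓ) : ℚ))
      ≤ (3/5) * acount [x,x,x] n := by
    have h1 : ∀ ℓ ∈ Finset.Icc 1 m, (acount [x,x,x] (n+1-2*ℓ) : ℚ)
        ≤ (5/12)^(2*ℓ-1) * acount [x,x,x] n := by
      intro ℓ hℓ
      rw [Finset.mem_Icc] at hℓ
      have h2 : 2*ℓ ≤ n+1 := by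
        have := (Nat.le_div_iff_mul_le (k := 2) (by norm_num)).mp hℓ.2
        omega
      exact chain IH (2*ℓ-1) (n+1-2*ℓ) (by omega)
    calc (∑ ℓ ∈ Finset.Icc 1 m, (acount [x,x,x] (n+1-2*ℓ) : ℚ))
        ≤ ∑ ℓ ∈ Finset.Icc 1 m, (5/12)^(2*ℓ-1) * (acount [x,x,x] n : ℚ) :=
          Finset.sum_le_sum h1
      _ = (∑ ℓ ∈ Finset.Icc 1 m, ((5:ℚ)/12)^(2*ℓ-1)) * acount [x,x,x] n := by
          rw [Finset.sum_mul]
      _ ≤ (3/5) * acount [x,x,x] n := by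
          apply mul_le_mul_of_nonneg_right _ (Nat.cast_nonneg _)
          have he : ∀ ℓ ∈ Finset.Icc 1 m, ((5:ℚ)/12)^(2*ℓ-1)
              = (12/5) * ((25:ℚ)/144)^ℓ := by
            intro ℓ hℓ
            rw [Finset.mem_Icc] at hℓ
            have h5 : ((25:ℚ)/144)^ℓ = ((5:ℚ)/12)^(2*ℓ) := by
              rw [pow_mul]; norm_num
            obtain ⟨e, he⟩ : ∃ e, 2*ℓ = e + 1 := ⟨2*ℓ-1, by omega⟩
            rw [h5, he, pow_succ]
            simp only [Nat.add_sub_cancel]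
            ring
          rw [Finset.sum_congr rfl he, ← Finset.mul_sum]
          have hg := geom_bound (25/144) (by norm_num) (by norm_num) m
          calc (12/5) * ∑ ℓ ∈ Finset.Icc 1 m, ((25:ℚ)/144)^ℓ
              ≤ (12/5) * ((25/144) / (1 - 25/144)) :=
                mul_le_mul_of_nonneg_left hg (by norm_num)
            _ ≤ 3/5 := by norm_num
  have hb : ((Bad [x,x,x] n).card : ℚ) ≤ (3/5) * acount [x,x,x] n := by
    calc ((Bad [x,x,x] n).card : ℚ)
        ≤ ((∑ ℓ ∈ Finset.Icc 1 m, acount [x,x,x] (n+1-2*ℓ) : ℕ) : ℚ) := by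
          exact_mod_cast hbad
      _ = ∑ ℓ ∈ Finset.Icc 1 m, (acount [x,x,x] (n+1-2*ℓ) : ℚ) := by push_cast; rfl
      _ ≤ (3/5) * acount [x,x,x] n := hsum
  have h0 : (3 * acount [x,x,x] n : ℚ)
      ≤ (acount [x,x,x] (n+1) : ℚ) + ((Bad [x,x,x] n).card : ℚ) := by
    exact_mod_cast hext
  have hfin : (12:ℚ) * acount [x,x,x] n ≤ 5 * acount [x,x,x] (n+1) := by linarith
  exact_mod_cast hfin

/-! ### From growth to infinitude -/

lemma acount_zero {q : List Δ} (hq : q ≠ []) : acount q 0 = 1 := by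
  have : Aset q 0 = {([] : List (Fin 3))} := by
    apply Finset.ext
    intro w
    simp only [mem_Aset, Finset.mem_singleton, List.length_eq_zero_iff]
    constructor
    · rintro ⟨rfl, -⟩; rfl
    · rintro rfl; exact ⟨rfl, avoids_nil hq⟩
  rw [acount, this, Finset.card_singleton]

lemma acount_pos {q : List Δ} (hq : q ≠ [])
    (grow : ∀ n, 12 * acount q n ≤ 5 * acount q (n+1)) :
    ∀ n, 0 < acount q n := by
  intro n
  induction n with
  | zero => rw [acount_zero hq]; norm_num
  | succ n ih => have := grow n; omega

lemma exists_avoiding {q : List Δ} (hq : q ≠ [])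
    (grow : ∀ n, 12 * acount q n ≤ 5 * acount q (n+1)) (n : ℕ) :
    ∃ w : List (Fin 3), w.length = n ∧ Avoids w q := by
  obtain ⟨w, hw⟩ := Finset.card_pos.mp (acount_pos hq grow n)
  exact ⟨w, mem_Aset.mp hw⟩

lemma infinite_of_all_lengths {p : List Δ}
    (h : ∀ n, ∃ w : List (Fin 3), w.length = n ∧ Avoids w p) :
    {w : List (Fin 3) | Avoids w p}.Infinite := by
  choose f hf1 hf2 using h
  exact Set.infinite_of_injective_forall_mem
    (f := f) (fun m n hmn => by rw [← hf1 m, hmn, hf1 n]) hf2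


/-! ### The general doubled pattern case -/

def WI (n : ℕ) : Finset (List (Fin 3)) := (Finset.Icc 1 n).biUnion W3

lemma mem_WI {n : ℕ} {w : List (Fin 3)} : w ∈ WI n ↔ 1 ≤ w.length ∧ w.length ≤ n := by
  simp only [WI, Finset.mem_biUnion, Finset.mem_Icc, mem_W3]
  constructor
  · rintro ⟨i, ⟨h1, h2⟩, rfl⟩; omega
  · rintro ⟨h1, h2⟩; exact ⟨w.length, ⟨h1, h2⟩, rfl⟩

def Fxt (q : List Δ) (f : (v : Δ) → v ∈ q.toFinset → List (Fin 3)) : Δ → List (Fin 3) :=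
  fun v => if h : v ∈ q.toFinset then f v h else []

def lenF (q : List Δ) (f : (v : Δ) → v ∈ q.toFinset → List (Fin 3)) : ℕ :=
  ((q.map (Fxt q f)).flatten).length

def PI (q : List Δ) (n : ℕ) : Finset ((v : Δ) → v ∈ q.toFinset → List (Fin 3)) :=
  (q.toFinset.pi fun _ => WI n).filter fun f => lenF q f ≤ n + 1

lemma Fxt_eq (q : List Δ) (g : Δ → List (Fin 3)) :
    q.map (Fxt q (fun v _ => g v)) = q.map g :=
  List.map_congr_left fun v hv => by simp [Fxt, List.mem_toFinset.mpr hv]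

lemma flatten_length_count (q : List Δ) (g : Δ → List (Fin 3)) :
    (q.map g).flatten.length = ∑ v ∈ q.toFinset, q.count v * (g v).length := by
  rw [List.length_flatten, List.map_map]
  have h := Finset.sum_list_map_count q (fun v => (g v).length)
  simpa [smul_eq_mul, Function.comp_def] using h

lemma lenF_eq_sum (q : List Δ) (f : (v : Δ) → v ∈ q.toFinset → List (Fin 3)) :
    lenF q f = ∑ v ∈ q.toFinset, q.count v * (Fxt q f v).length :=
  flatten_length_count q (Fxt q f)

lemma gen_bad_card (q : List Δ) (hq : q ≠ []) (hd : ∀ v ∈ q, 2 ≤ q.count v) (n : ℕ) :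
    (Bad q n).card ≤ ∑ f ∈ PI q n, acount q (n + 1 - lenF q f) := by
  classical
  have hq2 : 2 ≤ q.length := by
    obtain ⟨v, hv⟩ := List.exists_mem_of_ne_nil q hq
    exact le_trans (hd v hv) (List.count_le_length (a := v) (l := q))
  have hcs : (∑ f ∈ PI q n, acount q (n + 1 - lenF q f))
      = ((PI q n).sigma fun f => Aset q (n + 1 - lenF q f)).card := by
    rw [Finset.card_sigma]; rfl
  rw [hcs]
  apply Finset.card_le_card_of_injOn
    (fun wc => if h : ∃ g : Δ → List (Fin 3),
        (∀ v, g v ≠ []) ∧ (q.map g).flatten <:+ wc.1 ++ [wc.2]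
      then (⟨fun v _ => h.choose v,
        (wc.1 ++ [wc.2]).take (n + 1 - lenF q (fun v _ => h.choose v))⟩ :
        Σ _ : (v : Δ) → v ∈ q.toFinset → List (Fin 3), List (Fin 3))
      else ⟨fun _ _ => [], []⟩)
  · intro wc hwc
    obtain ⟨hw, z, hzs, hzi⟩ := bad_suffix hwc
    have hex : ∃ g : Δ → List (Fin 3),
        (∀ v, g v ≠ []) ∧ (q.map g).flatten <:+ wc.1 ++ [wc.2] := by
      obtain ⟨g, hg1, rfl⟩ := hzi
      exact ⟨g, hg1, hzs⟩
    simp only [dif_pos hex]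
    set g := hex.choose with hgdef
    obtain ⟨hg1, hgsuf⟩ := hex.choose_spec
    have hslen : (wc.1 ++ [wc.2]).length = n + 1 := by
      simp [(mem_Aset.mp hw).1]
    set m := (q.map g).flatten.length with hmdef
    have hlenF : lenF q (fun v _ => g v) = m := by
      rw [lenF, Fxt_eq]
    have hmle : m ≤ n + 1 := by
      rw [← hslen]; exact List.IsSuffix.length_le hgsuf
    have hmq : q.length ≤ m := isInstance_length_le ⟨g, hg1, rfl⟩
    have hn1 : 1 ≤ n := by omega
    have hcnt : ∀ v ∈ q.toFinset, q.count v * (g v).length ≤ m := by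
      intro v hv
      rw [hmdef, flatten_length_count q g]
      exact Finset.single_le_sum (f := fun w => q.count w * (g w).length)
        (fun _ _ => Nat.zero_le _) hv
    refine Finset.mem_sigma.mpr ⟨?_, ?_⟩
    · show (fun v _ => g v) ∈ PI q n
      rw [PI, Finset.mem_filter]
      constructor
      · rw [Finset.mem_pi]
        intro v hv
        rw [mem_WI]
        have h1 : 1 ≤ (g v).length := List.length_pos_iff.mpr (hg1 v)
        have h2 := hcnt v hv
        have h3 : 2 ≤ q.count v := hd v (List.mem_toFinset.mp hv)
        constructor
        · exact h1
        · nlinarith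
      · rw [hlenF]; exact hmle
    · show (wc.1 ++ [wc.2]).take (n + 1 - lenF q (fun v _ => g v)) ∈
        Aset q (n + 1 - lenF q (fun v _ => g v))
      rw [hlenF, mem_Aset]
      constructor
      · rw [List.length_take, hslen]; omega
      · have hle : n + 1 - m ≤ wc.1.length := by
          rw [(mem_Aset.mp hw).1]; omega
        rw [List.take_append_of_le_length hle]
        exact avoids_of_infix ((mem_Aset.mp hw).2) (List.take_prefix _ _).isInfix
  · intro wc hwc wc' hwc' heq
    obtain ⟨hw, z, hzs, hzi⟩ := bad_suffix hwc
    obtain ⟨hw', z', hzs', hzi'⟩ := bad_suffix hwc'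
    have hex : ∃ g : Δ → List (Fin 3),
        (∀ v, g v ≠ []) ∧ (q.map g).flatten <:+ wc.1 ++ [wc.2] := by
      obtain ⟨g, hg1, rfl⟩ := hzi
      exact ⟨g, hg1, hzs⟩
    have hex' : ∃ g : Δ → List (Fin 3),
        (∀ v, g v ≠ []) ∧ (q.map g).flatten <:+ wc'.1 ++ [wc'.2] := by
      obtain ⟨g, hg1, rfl⟩ := hzi'
      exact ⟨g, hg1, hzs'⟩
    simp only [dif_pos hex, dif_pos hex'] at heq
    obtain ⟨hfeq, hzeq⟩ := Sigma.mk.inj_iff.mp heq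
    rw [heq_iff_eq] at hzeq
    have hslen : (wc.1 ++ [wc.2]).length = n + 1 := by simp [(mem_Aset.mp hw).1]
    have hslen' : (wc'.1 ++ [wc'.2]).length = n + 1 := by simp [(mem_Aset.mp hw').1]
    -- reconstruction
    have hrec : ∀ (s zz : List (Fin 3)), zz <:+ s → s.length = n + 1 →
        s = s.take (n + 1 - zz.length) ++ zz := by
      intro s zz hsuf hslen2
      obtain ⟨y, rfl⟩ := hsuf
      have hyl : y.length = n + 1 - zz.length := by
        rw [← hslen2]; simp
      rw [← hyl, List.take_left]
    have h1 := hrec _ _ hex.choose_spec.2 hslen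
    have h1' := hrec _ _ hex'.choose_spec.2 hslen'
    have hfl : (q.map hex.choose).flatten = (q.map hex'.choose).flatten := by
      have e1 : (q.map hex.choose).flatten
          = (q.map (Fxt q (fun v _ => hex.choose v))).flatten := by rw [Fxt_eq]
      have e2 : (q.map hex'.choose).flatten
          = (q.map (Fxt q (fun v _ => hex'.choose v))).flatten := by rw [Fxt_eq]
      rw [e1, e2, show (fun v (_ : v ∈ q.toFinset) => hex.choose v)
        = (fun v (_ : v ∈ q.toFinset) => hex'.choose v) from hfeq]
    have hlf : lenF q (fun v _ => hex.choose v) = (q.map hex.choose).flatten.length := by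
      rw [lenF, Fxt_eq]
    have hlf' : lenF q (fun v _ => hex'.choose v) = (q.map hex'.choose).flatten.length := by
      rw [lenF, Fxt_eq]
    have hss : wc.1 ++ [wc.2] = wc'.1 ++ [wc'.2] := by
      rw [h1, h1']
      rw [← hlf, ← hlf', ← hfl, hzeq]
    obtain ⟨ha, hb⟩ := concat_injOn _ _ _ _ hss
    exact Prod.ext ha hb

lemma sum_weights (q : List Δ) (hd : ∀ v ∈ q, 2 ≤ q.count v) (n : ℕ) :
    ∑ f ∈ (q.toFinset.pi fun _ => WI n), ((5:ℚ)/12) ^ (lenF q f)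
      ≤ ((144:ℚ)/23) ^ q.toFinset.card * ((5:ℚ)/12) ^ q.length := by
  classical
  set x : ℚ := 5/12 with hx
  have hx0 : (0:ℚ) ≤ x := by norm_num
  have hx1 : x ≤ 1 := by norm_num
  -- product identity
  have hid : ∏ v ∈ q.toFinset, ∑ s ∈ WI n, x ^ (q.count v * s.length)
      = ∑ f ∈ (q.toFinset.pi fun _ => WI n), x ^ (lenF q f) := by
    rw [Finset.prod_sum]
    apply Finset.sum_congr rfl
    intro f hf
    rw [Finset.prod_pow_eq_pow_sum]
    congr 1
    rw [lenF_eq_sum]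
    rw [← Finset.sum_attach q.toFinset (fun v => q.count v * (Fxt q f v).length)]
    apply Finset.sum_congr rfl
    intro v _
    congr 1
    simp [Fxt, v.2]
  rw [← hid]
  -- per-variable bound
  have hper : ∀ v ∈ q.toFinset,
      ∑ s ∈ WI n, x ^ (q.count v * s.length) ≤ (144/23) * x ^ (q.count v) := by
    intro v hv
    have hc2 : 2 ≤ q.count v := hd v (List.mem_toFinset.mp hv)
    set c := q.count v with hcdef
    set t : ℚ := 3 * x ^ c with ht
    have ht0 : 0 ≤ t := by positivity
    have hxc : x ^ c ≤ x ^ 2 := pow_le_pow_of_le_one hx0 hx1 hc2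
    have ht34 : t ≤ 75/144 := by
      rw [ht]
      calc 3 * x ^ c ≤ 3 * x ^ 2 := by linarith
        _ = 75/144 := by norm_num [hx]
    have ht1 : t < 1 := by linarith
    have hbiu : ∑ s ∈ WI n, x ^ (c * s.length)
        = ∑ ℓ ∈ Finset.Icc 1 n, ∑ s ∈ W3 ℓ, x ^ (c * s.length) := by
      rw [WI, Finset.sum_biUnion]
      intro i _ j _ hij
      simp only [Finset.disjoint_left]
      intro w hwi hwj
      rw [mem_W3] at hwi hwj
      exact hij (by omega)
    have hinner : ∀ ℓ ∈ Finset.Icc 1 n, ∑ s ∈ W3 ℓ, x ^ (c * s.length) = t ^ ℓ := by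
      intro ℓ _
      have : ∀ s ∈ W3 ℓ, x ^ (c * s.length) = (x ^ c) ^ ℓ := by
        intro s hs
        rw [mem_W3] at hs
        rw [hs, ← pow_mul, mul_comm]
      rw [Finset.sum_congr rfl this, Finset.sum_const, card_W3, nsmul_eq_mul, ht]
      push_cast
      rw [mul_pow]
    rw [hbiu, Finset.sum_congr rfl hinner]
    have hgeom := geom_bound t ht0 ht1 n
    have hdenom : (69:ℚ)/144 ≤ 1 - t := by linarith
    have h2 : t / (1 - t) ≤ t * (144/69) := by
      rw [div_le_iff₀ (by linarith)]
      nlinarith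
    calc ∑ ℓ ∈ Finset.Icc 1 n, t ^ ℓ ≤ t / (1 - t) := hgeom
      _ ≤ t * (144/69) := h2
      _ = (144/23) * x ^ c := by rw [ht]; ring
  -- multiply out
  calc ∏ v ∈ q.toFinset, ∑ s ∈ WI n, x ^ (q.count v * s.length)
      ≤ ∏ v ∈ q.toFinset, (144/23) * x ^ (q.count v) := by
        apply Finset.prod_le_prod
        · intro v _
          apply Finset.sum_nonneg
          intro s _
          positivity
        · exact hper
    _ = ((144:ℚ)/23) ^ q.toFinset.card * x ^ (∑ v ∈ q.toFinset, q.count v) := by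
        rw [Finset.prod_mul_distrib, Finset.prod_const, Finset.prod_pow_eq_pow_sum]
    _ = ((144:ℚ)/23) ^ q.toFinset.card * x ^ q.length := by
        rw [List.sum_toFinset_count_eq_length]

lemma key_const (j : ℕ) (hj : 2 ≤ j) :
    ((144:ℚ)/23) ^ j * ((5:ℚ)/12) ^ (3 ^ j) ≤ 1/4 := by
  induction j, hj using Nat.le_induction with
  | base => norm_num
  | succ j hj ih =>
    have h9 : 9 ≤ 3 ^ j := by
      calc 9 = 3 ^ 2 := by norm_num
        _ ≤ 3 ^ j := Nat.pow_le_pow_right (by norm_num) hj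
    have h1 : 3 ^ (j+1) = 3 ^ j + 2 * 3 ^ j := by ring
    rw [pow_succ, h1, pow_add]
    have h2 : ((5:ℚ)/12) ^ (2 * 3 ^ j) ≤ (5/12) ^ 18 := by
      apply pow_le_pow_of_le_one (by norm_num) (by norm_num)
      omega
    have h3 : ((144:ℚ)/23) * (5/12) ^ (2 * 3 ^ j) ≤ 1 := by
      calc ((144:ℚ)/23) * (5/12) ^ (2 * 3 ^ j) ≤ (144/23) * (5/12) ^ 18 := by
            apply mul_le_mul_of_nonneg_left h2 (by norm_num)
        _ ≤ 1 := by norm_num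
    have h4 : (0:ℚ) ≤ (144/23) ^ j * (5/12) ^ (3 ^ j) := by positivity
    calc ((144:ℚ)/23) ^ j * (144/23) * ((5/12) ^ (3^j) * (5/12) ^ (2*3^j))
        = ((144/23) ^ j * (5/12) ^ (3^j)) * ((144/23) * (5/12) ^ (2*3^j)) := by ring
      _ ≤ (1/4) * 1 := by
          apply mul_le_mul ih h3 (by positivity) (by norm_num)
      _ = 1/4 := by norm_num

lemma lenF_pos {q : List Δ} (hq : q ≠ []) {n : ℕ}
    {f : (v : Δ) → v ∈ q.toFinset → List (Fin 3)}
    (hf : f ∈ (q.toFinset.pi fun _ => WI n)) : 1 ≤ lenF q f := by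
  obtain ⟨v, hv⟩ := List.exists_mem_of_ne_nil q hq
  have hvt : v ∈ q.toFinset := List.mem_toFinset.mpr hv
  rw [Finset.mem_pi] at hf
  have h1 := (mem_WI.mp (hf v hvt)).1
  have h2 : 1 ≤ q.count v := List.count_pos_iff.mpr hv
  rw [lenF_eq_sum]
  calc 1 ≤ q.count v * (Fxt q f v).length := by
        have : (Fxt q f v).length = (f v hvt).length := by simp [Fxt, hvt]
        rw [this]; nlinarith
    _ ≤ ∑ w ∈ q.toFinset, q.count w * (Fxt q f w).length :=
        Finset.single_le_sum (f := fun w => q.count w * (Fxt q f w).length)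
          (fun _ _ => Nat.zero_le _) hvt

lemma gen_growth (q : List Δ) (hq : q ≠ []) (hj : 2 ≤ q.toFinset.card)
    (hd : ∀ v ∈ q, 2 ≤ q.count v) (hlen : 3 ^ q.toFinset.card ≤ q.length) (n : ℕ) :
    12 * acount q n ≤ 5 * acount q (n+1) := by
  induction n using Nat.strong_induction_on with
  | _ n IH =>
  have hext := ext_bound q n
  have hbad := gen_bad_card q hq hd n
  have hsum : (∑ f ∈ PI q n, (acount q (n + 1 - lenF q f) : ℚ))
      ≤ (3/5) * acount q n := by
    have hstep : ∀ f ∈ PI q n, (acount q (n + 1 - lenF q f) : ℚ)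
        ≤ (5/12) ^ (lenF q f - 1) * acount q n := by
      intro f hf
      rw [PI, Finset.mem_filter] at hf
      have h1 : 1 ≤ lenF q f := lenF_pos hq hf.1
      have h2 : lenF q f ≤ n + 1 := hf.2
      exact chain IH (lenF q f - 1) (n + 1 - lenF q f) (by omega)
    calc (∑ f ∈ PI q n, (acount q (n + 1 - lenF q f) : ℚ))
        ≤ ∑ f ∈ PI q n, ((5:ℚ)/12) ^ (lenF q f - 1) * acount q n :=
          Finset.sum_le_sum hstep
      _ = (∑ f ∈ PI q n, ((5:ℚ)/12) ^ (lenF q f - 1)) * acount q n := by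
          rw [Finset.sum_mul]
      _ ≤ ((12/5) * ∑ f ∈ PI q n, ((5:ℚ)/12) ^ (lenF q f)) * acount q n := by
          apply mul_le_mul_of_nonneg_right _ (Nat.cast_nonneg _)
          rw [Finset.mul_sum]
          apply Finset.sum_le_sum
          intro f hf
          rw [PI, Finset.mem_filter] at hf
          have h1 : 1 ≤ lenF q f := lenF_pos hq hf.1
          obtain ⟨e, he⟩ : ∃ e, lenF q f = e + 1 := ⟨lenF q f - 1, by omega⟩
          rw [he, pow_succ]
          simp only [Nat.add_sub_cancel]
          rw [← mul_assoc]
          apply le_of_eq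
          ring
      _ ≤ ((12/5) * (1/4)) * acount q n := by
          apply mul_le_mul_of_nonneg_right _ (Nat.cast_nonneg _)
          apply mul_le_mul_of_nonneg_left _ (by norm_num)
          have hsub : ∑ f ∈ PI q n, ((5:ℚ)/12) ^ (lenF q f)
              ≤ ∑ f ∈ (q.toFinset.pi fun _ => WI n), ((5:ℚ)/12) ^ (lenF q f) := by
            apply Finset.sum_le_sum_of_subset_of_nonneg (Finset.filter_subset _ _)
            intro f _ _
            positivity
          have hw := sum_weights q hd n
          have hq3 : ((5:ℚ)/12) ^ q.length ≤ (5/12) ^ (3 ^ q.toFinset.card) :=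
            pow_le_pow_of_le_one (by norm_num) (by norm_num) hlen
          have hkey := key_const q.toFinset.card hj
          calc ∑ f ∈ PI q n, ((5:ℚ)/12) ^ (lenF q f)
              ≤ ((144:ℚ)/23) ^ q.toFinset.card * ((5:ℚ)/12) ^ q.length :=
                le_trans hsub hw
            _ ≤ ((144:ℚ)/23) ^ q.toFinset.card * ((5:ℚ)/12) ^ (3 ^ q.toFinset.card) := by
                apply mul_le_mul_of_nonneg_left hq3 (by positivity)
            _ ≤ 1/4 := hkey
      _ = (3/5) * acount q n := by ring
  have hb : ((Bad q n).card : ℚ) ≤ (3/5) * acount q n := by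
    calc ((Bad q n).card : ℚ)
        ≤ ((∑ f ∈ PI q n, acount q (n + 1 - lenF q f) : ℕ) : ℚ) := by
          exact_mod_cast hbad
      _ = ∑ f ∈ PI q n, (acount q (n + 1 - lenF q f) : ℚ) := by push_cast; rfl
      _ ≤ (3/5) * acount q n := hsum
  have h0 : (3 * acount q n : ℚ) ≤ (acount q (n+1) : ℚ) + ((Bad q n).card : ℚ) := by
    exact_mod_cast hext
  have hfin : (12:ℚ) * acount q n ≤ 5 * acount q (n+1) := by linarith
  exact_mod_cast hfin

end AvoidAux



end

theorem avoid_three_of_length_ge_pow {Δ : Type*} [DecidableEq Δ]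
    (k : ℕ) (hk : 0 < k) (p : List Δ) (hp : p ≠ [])
    (hvars : p.toFinset.card = k) (hlen : 3 ^ k ≤ p.length) :
    {w : List (Fin 3) | Avoids w p}.Infinite := by
  classical
  obtain ⟨q, hinf, hqne, hqlen, hqd⟩ :=
    AvoidAux.reduction k p hp (le_of_eq hvars) hlen
  have hcard1 : 1 ≤ q.toFinset.card := by
    obtain ⟨v, hv⟩ := List.exists_mem_of_ne_nil q hqne
    exact Finset.card_pos.mpr ⟨v, List.mem_toFinset.mpr hv⟩
  rcases eq_or_lt_of_le hcard1 with hj1 | hj2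
  · -- one variable: q is a power of x, use cube-freeness
    obtain ⟨x, hx⟩ := Finset.card_eq_one.mp hj1.symm
    have hrep : ∀ v ∈ q, v = x := fun v hv => by
      have hmem : v ∈ q.toFinset := List.mem_toFinset.mpr hv
      rw [hx] at hmem
      simpa using hmem
    have hq3 : 3 ≤ q.length := by
      have : (3:ℕ) ^ q.toFinset.card = 3 := by rw [← hj1]; norm_num
      omega
    have hqrep : q = List.replicate q.length x :=
      List.eq_replicate_of_mem hrep ▸ rfl
    have hcube : [x, x, x] <:+: q := by
      have h1 : q = List.replicate 3 x ++ List.replicate (q.length - 3) x := by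
        rw [← List.replicate_add, show 3 + (q.length - 3) = q.length by omega]
        exact List.eq_replicate_of_mem hrep
      refine ⟨[], List.replicate (q.length - 3) x, ?_⟩
      conv_rhs => rw [h1]
      simp [List.replicate_succ]
    apply AvoidAux.infinite_of_all_lengths
    intro n
    obtain ⟨w, hwl, hwa⟩ := AvoidAux.exists_avoiding (q := [x, x, x])
      (by simp) (AvoidAux.cube_growth x) n
    exact ⟨w, hwl, AvoidAux.avoids_of_avoids_infix_pattern hinf
      (AvoidAux.avoids_of_avoids_infix_pattern hcube hwa)⟩
  · apply AvoidAux.infinite_of_all_lengths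
    intro n
    obtain ⟨w, hwl, hwa⟩ := AvoidAux.exists_avoiding hqne
      (AvoidAux.gen_growth q hqne hj2 hqd hqlen) n
    exact ⟨w, hwl, AvoidAux.avoids_of_avoids_infix_pattern hinf hwa⟩
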